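/- Let x, z : I → ℝ be C² with x > 0 and x'² − z'² = η constant (η = ±1), so that x'x'' = z'z''. If x and z satisfy the mean curvature equation 2xH + xx'z'' − xx''z' + ηz' = 0, then the Lorentz-number-valued function A(s) = x x' + ℓ x z' satisfies the linear equation A' + 2ℓη H A − η = 0. -/

import Mathlib

/-- The ring of Lorentz numbers `𝕃 = {a + bℓ : ℓ² = 1}`, i.e. `ℝ[X]/(X² − 1)`. -/
@[ext]
structure Lorentz : Type where
  re : ℝ
  im : ℝ

namespace Lorentz

instance : Zero Lorentz := ⟨⟨0, 0⟩⟩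
instance : One Lorentz := ⟨⟨1, 0⟩⟩
instance : Add Lorentz := ⟨fun w z => ⟨w.re + z.re, w.im + z.im⟩⟩
instance : Neg Lorentz := ⟨fun w => ⟨-w.re, -w.im⟩⟩
instance : Mul Lorentz := ⟨fun w z => ⟨w.re * z.re + w.im * z.im, w.re * z.im + w.im * z.re⟩⟩

@[simp] theorem zero_re : (0 : Lorentz).re = 0 := rfl
@[simp] theorem zero_im : (0 : Lorentz).im = 0 := rfl
@[simp] theorem one_re : (1 : Lorentz).re = 1 := rfl
@[simp] theorem one_im : (1 : Lorentz).im = 0 := rfl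
@[simp] theorem add_re (w z : Lorentz) : (w + z).re = w.re + z.re := rfl
@[simp] theorem add_im (w z : Lorentz) : (w + z).im = w.im + z.im := rfl
@[simp] theorem neg_re (w : Lorentz) : (-w).re = -w.re := rfl
@[simp] theorem neg_im (w : Lorentz) : (-w).im = -w.im := rfl
@[simp] theorem mul_re (w z : Lorentz) : (w * z).re = w.re * z.re + w.im * z.im := rfl
@[simp] theorem mul_im (w z : Lorentz) : (w * z).im = w.re * z.im + w.im * z.re := rfl

instance : CommRing Lorentz where
  add_assoc a b c := by ext <;> simp <;> ring
  zero_add a := by ext <;> simp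
  add_zero a := by ext <;> simp
  add_comm a b := by ext <;> simp <;> ring
  neg_add_cancel a := by ext <;> simp
  mul_assoc a b c := by ext <;> simp <;> ring
  one_mul a := by ext <;> simp
  mul_one a := by ext <;> simp
  left_distrib a b c := by ext <;> simp <;> ring
  right_distrib a b c := by ext <;> simp <;> ring
  zero_mul a := by ext <;> simp
  mul_zero a := by ext <;> simp
  mul_comm a b := by ext <;> simp <;> ring
  nsmul := nsmulRec
  zsmul := zsmulRec

/-- The hypercomplex unit `ℓ`, with `ℓ² = 1`. -/
def ell : Lorentz := ⟨0, 1⟩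

@[simp] theorem ell_mul_ell : ell * ell = 1 := by ext <;> simp [ell]

/-- Conjugation: `conj (a + bℓ) = a − bℓ`. -/
def conj (w : Lorentz) : Lorentz := ⟨w.re, -w.im⟩

/-- The Lorentz-number exponential `exp(a + bℓ) = e^a (cosh b + ℓ sinh b)`. -/
noncomputable def lexp (w : Lorentz) : Lorentz :=
  ⟨Real.exp w.re * Real.cosh w.im, Real.exp w.re * Real.sinh w.im⟩

/-- Componentwise derivative of an `𝕃`-valued function of a real variable. -/
def HasLDerivAt (f : ℝ → Lorentz) (f' : Lorentz) (s : ℝ) : Prop :=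
  HasDerivAt (fun t => (f t).re) f'.re s ∧ HasDerivAt (fun t => (f t).im) f'.im s

end Lorentz

open Lorentz in
/-- For a unit-speed generating curve `(x, 0, z)` in the timelike `xz`-plane rotated
about the timelike `z`-axis, if the mean curvature equation
`2xH + xx'z'' − xx''z' + ηz' = 0` holds, then `A = xx' + ℓ xz'` satisfies the linear
equation `A' + 2ℓη H A − η = 0`. -/
theorem mean_curvature_timelike_axis (η : ℝ) (hη : η = 1 ∨ η = -1)
    (H x z x' z' x'' z'' : ℝ → ℝ)
    (hx : ∀ s, HasDerivAt x (x' s) s) (hx' : ∀ s, HasDerivAt x' (x'' s) s)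
    (hz : ∀ s, HasDerivAt z (z' s) s) (hz' : ∀ s, HasDerivAt z' (z'' s) s)
    (hxpos : ∀ s, 0 < x s)
    (hunit : ∀ s, x' s ^ 2 - z' s ^ 2 = η)
    (hmc : ∀ s, 2 * x s * H s + x s * x' s * z'' s - x s * x'' s * z' s + η * z' s = 0) :
    ∀ s, HasLDerivAt (fun t => Lorentz.mk (x t * x' t) (x t * z' t))
      (Lorentz.mk η 0 - Lorentz.mk 0 (2 * η * H s) * ⟨x s * x' s, x s * z' s⟩) s := by
  intro s
  have hη2 : η ^ 2 = 1 := by rcases hη with h | h <;> rw [h] <;> norm_num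
  have key : x' s * x'' s = z' s * z'' s := by
    have h1 : HasDerivAt (fun t => x' t ^ 2 - z' t ^ 2)
        (2 * x' s * x'' s - 2 * z' s * z'' s) s := by
      have := (((hx' s).pow 2).sub ((hz' s).pow 2))
      refine this.congr_deriv ?_
      ring
    have h2 : HasDerivAt (fun t => x' t ^ 2 - z' t ^ 2) 0 s := by
      have he : (fun t => x' t ^ 2 - z' t ^ 2) = fun _ => η := funext hunit
      rw [he]
      exact hasDerivAt_const s η
    have := h1.unique h2
    linarith
  have hre : (Lorentz.mk η 0 - Lorentz.mk 0 (2 * η * H s) * ⟨x s * x' s, x s * z' s⟩).re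
      = η - 2 * η * H s * (x s * z' s) := by
    show η + -(0 * (x s * x' s) + 2 * η * H s * (x s * z' s)) = _
    ring
  have him : (Lorentz.mk η 0 - Lorentz.mk 0 (2 * η * H s) * ⟨x s * x' s, x s * z' s⟩).im
      = -(2 * η * H s * (x s * x' s)) := by
    show 0 + -(0 * (x s * z' s) + 2 * η * H s * (x s * x' s)) = _
    ring
  constructor
  · show HasDerivAt (fun t => x t * x' t) _ s
    rw [hre]
    have hd := (hx s).mul (hx' s)
    refine hd.congr_deriv (Eq.symm ?_)
    have h1 := hunit s
    have h2 := hmc s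
    linear_combination -(η * z' s) * h2 - η * x s * x' s * key +
      (η * x s * x'' s - 1) * h1 + (x s * x'' s + z' s ^ 2) * hη2
  · show HasDerivAt (fun t => x t * z' t) _ s
    rw [him]
    have hd := (hx s).mul (hz' s)
    refine hd.congr_deriv (Eq.symm ?_)
    have h1 := hunit s
    have h2 := hmc s
    linear_combination -(η * x' s) * h2 - η * x s * z' s * key +
      η * x s * z'' s * h1 + (x s * z'' s + x' s * z' s) * hη2
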